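/- Let d ∈ ℕ and let k ≥ 2 be an integer, ℓ := ⌊d/2⌋ + k + 1, and let Ψ_{ℓ,k}(x) := ψ_{ℓ,k}(‖x‖₂) be the radial Wendland function on ℝ^d. Then for every 1 ≤ j ≤ d, the pure second partial derivative satisfies ∂_j ∂_j Ψ_{ℓ,k}(x − y)|_{x = y} < 0, and its value (equal to 2b₂, twice the quadratic coefficient of ψ_{ℓ,k}) is independent of j. -/

import Mathlib

set_option maxHeartbeats 1000000

open MeasureTheory

/-- Partial derivative `∂_i f` on `ℝ^d`. -/
noncomputable def pd {d : ℕ} (i : Fin d) (f : EuclideanSpace ℝ (Fin d) → ℝ) :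
    EuclideanSpace ℝ (Fin d) → ℝ :=
  fun x => fderiv ℝ f x (EuclideanSpace.single i 1)

/-- The Wendland function
`ψ_{ℓ,k}(r) = (1/(Γ(k) 2^{k-1})) ∫_r^1 s (1-s)^ℓ (s²-r²)^{k-1} ds` for `0 ≤ r ≤ 1`,
and `0` for `r > 1`. -/
noncomputable def wend (ℓ k : ℕ) (r : ℝ) : ℝ :=
  if r ≤ 1 then
    (1 / (Real.Gamma k * 2 ^ (k - 1))) *
      ∫ s in r..1, s * (1 - s) ^ ℓ * (s ^ 2 - r ^ 2) ^ (k - 1)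
  else 0

open Filter Topology

open Filter Topology

lemma tiny_zero {v M : ℝ} (h : ∀ r : ℝ, r ∈ Set.Ioc (0:ℝ) 1 → |v| ≤ M * r) : v = 0 := by
  by_contra hv
  have hv' : 0 < |v| := abs_pos.mpr hv
  have hM : 0 < M := by
    have := h 1 (by constructor <;> norm_num)
    nlinarith
  set r := min 1 (|v| / (2 * M)) with hr
  have hr0 : 0 < r := lt_min one_pos (by positivity)
  have hr1 : r ≤ 1 := min_le_left _ _
  have h4 := h r ⟨hr0, hr1⟩
  have h2 : M * r ≤ M * (|v| / (2 * M)) := by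
    apply mul_le_mul_of_nonneg_left (min_le_right _ _) hM.le
  have h3 : M * (|v| / (2 * M)) = |v| / 2 := by
    field_simp
  nlinarith

lemma taylor2 {x t : ℝ} (hx0 : 0 ≤ x) (hx : x ≤ 1) (ht0 : 0 ≤ t) (ht : t ≤ 1) (n : ℕ) :
    |(x - t)^n - x^n + (n : ℝ) * x^(n-1) * t| ≤ (n : ℝ)^2 * t^2 := by
  induction n with
  | zero => simp
  | succ p ih =>
    rcases Nat.eq_zero_or_pos p with hp | hp
    · subst hp
      have : (x - t)^1 - x^1 + ((0+1:ℕ):ℝ) * x^(1-1) * t = 0 := by norm_num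
      rw [this, abs_zero]
      positivity
    · obtain ⟨q, rfl⟩ : ∃ q, p = q + 1 := ⟨p - 1, by omega⟩
      have key : (x - t)^(q+1+1) - x^(q+1+1) + ((q+1+1:ℕ):ℝ) * x^((q+1+1)-1) * t
          = (x - t) * ((x-t)^(q+1) - x^(q+1) + ((q+1:ℕ):ℝ) * x^((q+1)-1) * t)
            + ((q+1:ℕ):ℝ) * x^q * t^2 := by
        push_cast
        ring
      rw [key]
      have h1 : |x - t| ≤ 1 := abs_le.mpr ⟨by linarith, by linarith⟩
      have h2 : x^q ≤ 1 := pow_le_one₀ hx0 hx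
      have h2' : (0:ℝ) ≤ x^q := pow_nonneg hx0 q
      have h3 := abs_add_le ((x - t) * ((x-t)^(q+1) - x^(q+1) + ((q+1:ℕ):ℝ) * x^((q+1)-1) * t))
        (((q+1:ℕ):ℝ) * x^q * t^2)
      have h4 : |(x - t) * ((x-t)^(q+1) - x^(q+1) + ((q+1:ℕ):ℝ) * x^((q+1)-1) * t)|
          ≤ ((q+1:ℕ):ℝ)^2 * t^2 := by
        rw [abs_mul]
        calc |x - t| * |(x-t)^(q+1) - x^(q+1) + ((q+1:ℕ):ℝ) * x^((q+1)-1) * t|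
            ≤ 1 * (((q+1:ℕ):ℝ)^2 * t^2) := by
              apply mul_le_mul h1 ih (abs_nonneg _) zero_le_one
          _ = ((q+1:ℕ):ℝ)^2 * t^2 := one_mul _
      have hq : (0:ℝ) ≤ ((q+1:ℕ):ℝ) := by positivity
      have h5 : |((q+1:ℕ):ℝ) * x^q * t^2| ≤ ((q+1:ℕ):ℝ) * t^2 := by
        rw [abs_of_nonneg (by positivity)]
        have := mul_le_mul_of_nonneg_right (mul_le_mul_of_nonneg_left h2 hq) (sq_nonneg t)
        simpa [mul_assoc] using this
      calc |(x - t) * ((x-t)^(q+1) - x^(q+1) + ((q+1:ℕ):ℝ) * x^((q+1)-1) * t)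
            + ((q+1:ℕ):ℝ) * x^q * t^2| ≤ _ := h3
        _ ≤ ((q+1:ℕ):ℝ)^2 * t^2 + ((q+1:ℕ):ℝ) * t^2 := add_le_add h4 h5
        _ ≤ ((q+1+1:ℕ):ℝ)^2 * t^2 := by push_cast; nlinarith [sq_nonneg t]

lemma wend_coeffs (ℓ k : ℕ) (hk : 2 ≤ k) (N : ℕ) (hN : 3 ≤ N) (b : ℕ → ℝ)
    (hb : ∀ r : ℝ, 0 ≤ r → r ≤ 1 → wend ℓ k r = ∑ m ∈ Finset.range N, b m * r ^ m) :
    b 1 = 0 ∧ b 2 < 0 := by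
  set κ : ℝ := ((k - 1 : ℕ) : ℝ) with hκ
  have hκ1 : 1 ≤ κ := by
    rw [hκ]
    have : 1 ≤ k - 1 := by omega
    exact_mod_cast this
  set c : ℝ := 1 / (Real.Gamma k * 2 ^ (k - 1)) with hc
  have hc0 : 0 < c := by
    have h1 : 0 < Real.Gamma k := Real.Gamma_pos_of_pos (by exact_mod_cast Nat.zero_lt_of_lt hk)
    rw [hc]; positivity
  set f : ℝ → ℝ → ℝ := fun r s => s * (1 - s) ^ ℓ * (s ^ 2 - r ^ 2) ^ (k - 1) with hf
  have hfc : ∀ r : ℝ, Continuous (f r) := fun r => by fun_prop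
  have hfi : ∀ r a b : ℝ, IntervalIntegrable (f r) volume a b :=
    fun r a b => (hfc r).intervalIntegrable a b
  set W : ℝ → ℝ := fun r => ∫ s in r..1, f r s with hW
  have wend_eq : ∀ r : ℝ, r ≤ 1 → wend ℓ k r = c * W r := by
    intro r h
    rw [wend, if_pos h]
  set g : ℝ → ℝ := fun s => s * (1 - s) ^ ℓ * (s ^ 2) ^ ((k - 1) - 1) with hg
  have hgc : Continuous g := by fun_prop
  set A : ℝ := ∫ s in (0:ℝ)..1, g s with hA
  have hA0 : 0 < A := by
    rw [hA]
    apply intervalIntegral.intervalIntegral_pos_of_pos_on (hgc.intervalIntegrable 0 1)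
    · intro s hs
      obtain ⟨h1, h2⟩ := hs
      have h3 : 0 < 1 - s := by linarith
      have : g s = s * (1 - s) ^ ℓ * (s ^ 2) ^ ((k - 1) - 1) := rfl
      rw [this]; positivity
    · norm_num
  -- main estimate
  have main : ∀ r : ℝ, 0 ≤ r → r ≤ 1 →
      |W r - W 0 + κ * A * r ^ 2| ≤ (κ ^ 2 + 1) * r ^ 3 := by
    intro r h0 h1
    have split : W r = (∫ s in (0:ℝ)..1, f r s) - ∫ s in (0:ℝ)..r, f r s := by
      have h2 := intervalIntegral.integral_add_adjacent_intervals (hfi r 0 r) (hfi r r 1)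
      have h3 : W r = ∫ s in r..1, f r s := rfl
      rw [h3]; linarith
    have hW0 : W 0 = ∫ s in (0:ℝ)..1, f 0 s := rfl
    have hT1 : (∫ s in (0:ℝ)..1, f r s) - W 0 + κ * A * r ^ 2
        = ∫ s in (0:ℝ)..1, (f r s - f 0 s + (κ * r ^ 2) * g s) := by
      rw [intervalIntegral.integral_add ((hfi r 0 1).sub (hfi 0 0 1))
            ((hgc.intervalIntegrable 0 1).const_mul _),
          intervalIntegral.integral_sub (hfi r 0 1) (hfi 0 0 1),
          intervalIntegral.integral_const_mul]
      rw [hW0, hA]; ring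
    have hT1b : |∫ s in (0:ℝ)..1, (f r s - f 0 s + (κ * r ^ 2) * g s)| ≤ κ ^ 2 * r ^ 3 := by
      have hbd : ∀ s ∈ Set.uIoc (0:ℝ) 1, ‖f r s - f 0 s + (κ * r ^ 2) * g s‖ ≤ κ ^ 2 * r ^ 3 := by
        intro s hs
        rw [Set.uIoc_of_le (by norm_num : (0:ℝ) ≤ 1)] at hs
        obtain ⟨hs0, hs1⟩ := hs
        have factor : f r s - f 0 s + (κ * r ^ 2) * g s
            = (s * (1 - s) ^ ℓ) *
              ((s ^ 2 - r ^ 2) ^ (k - 1) - (s ^ 2) ^ (k - 1) + κ * (s ^ 2) ^ ((k - 1) - 1) * r ^ 2) := by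
          simp only [hf, hg]
          ring
        rw [Real.norm_eq_abs, factor, abs_mul]
        have hterm : |(s ^ 2 - r ^ 2) ^ (k - 1) - (s ^ 2) ^ (k - 1)
            + κ * (s ^ 2) ^ ((k - 1) - 1) * r ^ 2| ≤ κ ^ 2 * (r ^ 2) ^ 2 := by
          have := taylor2 (x := s ^ 2) (t := r ^ 2) (by positivity) (by nlinarith)
            (by positivity) (by nlinarith) (k - 1)
          exact this
        have hfac : |s * (1 - s) ^ ℓ| ≤ 1 := by
          rw [abs_mul, abs_pow]
          have e1 : |s| ≤ 1 := by rw [abs_of_nonneg hs0.le]; exact hs1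
          have e2 : |1 - s| ≤ 1 := by rw [abs_of_nonneg (by linarith)]; linarith
          have h9 : |1 - s| ^ ℓ ≤ 1 := pow_le_one₀ (abs_nonneg (1 - s)) e2
          nlinarith [abs_nonneg s, pow_nonneg (abs_nonneg (1 - s)) ℓ]
        have hr43 : (r ^ 2) ^ 2 ≤ r ^ 3 := by
          have h4 : r ^ 4 ≤ r ^ 3 := pow_le_pow_of_le_one h0 h1 (by norm_num)
          calc (r ^ 2) ^ 2 = r ^ 4 := by ring
            _ ≤ r ^ 3 := h4
        calc |s * (1 - s) ^ ℓ| * |(s ^ 2 - r ^ 2) ^ (k - 1) - (s ^ 2) ^ (k - 1)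
              + κ * (s ^ 2) ^ ((k - 1) - 1) * r ^ 2|
            ≤ 1 * (κ ^ 2 * (r ^ 2) ^ 2) := mul_le_mul hfac hterm (abs_nonneg _) zero_le_one
          _ = κ ^ 2 * (r ^ 2) ^ 2 := one_mul _
          _ ≤ κ ^ 2 * r ^ 3 := mul_le_mul_of_nonneg_left hr43 (sq_nonneg κ)
      have := intervalIntegral.norm_integral_le_of_norm_le_const hbd
      simpa using this
    have hT2b : |∫ s in (0:ℝ)..r, f r s| ≤ r ^ 3 := by
      have hbd : ∀ s ∈ Set.uIoc (0:ℝ) r, ‖f r s‖ ≤ r * (r ^ 2) ^ (k - 1) := by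
        intro s hs
        rw [Set.uIoc_of_le h0] at hs
        obtain ⟨hs0, hsr⟩ := hs
        have e1 : |s| ≤ r := by rw [abs_of_nonneg hs0.le]; exact hsr
        have e2 : |(1 - s) ^ ℓ| ≤ 1 := by
          rw [abs_pow]
          apply pow_le_one₀ (abs_nonneg _)
          rw [abs_of_nonneg (by nlinarith)]; nlinarith
        have e3 : |(s ^ 2 - r ^ 2) ^ (k - 1)| ≤ (r ^ 2) ^ (k - 1) := by
          rw [abs_pow]
          apply pow_le_pow_left₀ (abs_nonneg _)
          rw [abs_of_nonpos (by nlinarith)]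
          nlinarith
        show |s * (1 - s) ^ ℓ * (s ^ 2 - r ^ 2) ^ (k - 1)| ≤ r * (r ^ 2) ^ (k - 1)
        rw [abs_mul, abs_mul]
        calc |s| * |(1 - s) ^ ℓ| * |(s ^ 2 - r ^ 2) ^ (k - 1)|
            ≤ r * 1 * (r ^ 2) ^ (k - 1) := by
              apply mul_le_mul (mul_le_mul e1 e2 (abs_nonneg _) (by linarith [abs_nonneg s])) e3
                (abs_nonneg _) (by positivity)
          _ = r * (r ^ 2) ^ (k - 1) := by ring
      have h5 := intervalIntegral.norm_integral_le_of_norm_le_const hbd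
      rw [Real.norm_eq_abs] at h5
      have h6 : r * (r ^ 2) ^ (k - 1) * |r - 0| = r ^ (2 * k) := by
        rw [sub_zero, abs_of_nonneg h0, ← pow_mul]
        rw [show r * r ^ (2 * (k - 1)) * r = r ^ (2 * (k - 1) + 2) by ring]
        congr 1
        omega
      rw [h6] at h5
      calc |∫ s in (0:ℝ)..r, f r s| ≤ r ^ (2 * k) := h5
        _ ≤ r ^ 3 := pow_le_pow_of_le_one h0 h1 (by omega)
    calc |W r - W 0 + κ * A * r ^ 2|
        = |((∫ s in (0:ℝ)..1, f r s) - W 0 + κ * A * r ^ 2) - ∫ s in (0:ℝ)..r, f r s| := by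
          rw [split]; congr 1; ring
      _ ≤ |(∫ s in (0:ℝ)..1, f r s) - W 0 + κ * A * r ^ 2| + |∫ s in (0:ℝ)..r, f r s| :=
          abs_sub _ _
      _ ≤ κ ^ 2 * r ^ 3 + r ^ 3 := by
          rw [hT1]
          exact add_le_add hT1b hT2b
      _ = (κ ^ 2 + 1) * r ^ 3 := by ring
  -- coefficient extraction
  have hb0 : b 0 = c * W 0 := by
    have h1 := hb 0 le_rfl zero_le_one
    rw [wend_eq 0 zero_le_one] at h1
    have h2 : ∑ m ∈ Finset.range N, b m * (0:ℝ) ^ m = b 0 := by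
      rw [Finset.sum_eq_single 0]
      · norm_num
      · intro m _ hm0
        simp [zero_pow hm0]
      · intro h
        exact absurd (Finset.mem_range.mpr (by omega)) h
    rw [h2] at h1
    exact h1.symm
  set B : ℝ := ∑ m ∈ Finset.Ico 3 N, |b m| with hB
  have tail : ∀ r : ℝ, 0 ≤ r → r ≤ 1 →
      |(∑ m ∈ Finset.range N, b m * r ^ m) - (b 0 + b 1 * r + b 2 * r ^ 2)| ≤ B * r ^ 3 := by
    intro r h0 h1
    have hsplit : ∑ m ∈ Finset.range N, b m * r ^ m
        = (∑ m ∈ Finset.range 3, b m * r ^ m) + ∑ m ∈ Finset.Ico 3 N, b m * r ^ m := by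
      rw [Finset.range_eq_Ico, ← Finset.sum_Ico_consecutive _ (by omega : 0 ≤ 3) hN,
        ← Finset.range_eq_Ico]
    have h3 : ∑ m ∈ Finset.range 3, b m * r ^ m = b 0 + b 1 * r + b 2 * r ^ 2 := by
      rw [Finset.sum_range_succ, Finset.sum_range_succ, Finset.sum_range_one]
      ring
    rw [hsplit, h3, add_sub_cancel_left]
    calc |∑ m ∈ Finset.Ico 3 N, b m * r ^ m| ≤ ∑ m ∈ Finset.Ico 3 N, |b m * r ^ m| :=
        Finset.abs_sum_le_sum_abs _ _
      _ ≤ ∑ m ∈ Finset.Ico 3 N, |b m| * r ^ 3 := by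
          apply Finset.sum_le_sum
          intro m hm
          rw [abs_mul, abs_pow, abs_of_nonneg h0]
          apply mul_le_mul_of_nonneg_left _ (abs_nonneg _)
          exact pow_le_pow_of_le_one h0 h1 (Finset.mem_Ico.mp hm).1
      _ = B * r ^ 3 := by rw [hB, Finset.sum_mul]
  set γ : ℝ := b 2 + c * (κ * A) with hγ
  set D : ℝ := B + c * (κ ^ 2 + 1) with hD
  have hstep : ∀ r : ℝ, r ∈ Set.Ioc (0:ℝ) 1 → |b 1 * r + γ * r ^ 2| ≤ D * r ^ 3 := by
    intro r hr
    obtain ⟨hr0, hr1⟩ := hr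
    have h1 := hb r hr0.le hr1
    rw [wend_eq r hr1] at h1
    have h2 : b 1 * r + γ * r ^ 2
        = (c * W r - c * W 0 + c * (κ * A * r ^ 2))
          - ((∑ m ∈ Finset.range N, b m * r ^ m) - (b 0 + b 1 * r + b 2 * r ^ 2)) := by
      rw [← h1, hb0, hγ]; ring
    rw [h2]
    have h3 : |c * W r - c * W 0 + c * (κ * A * r ^ 2)| ≤ c * ((κ ^ 2 + 1) * r ^ 3) := by
      have e : c * W r - c * W 0 + c * (κ * A * r ^ 2) = c * (W r - W 0 + κ * A * r ^ 2) := by ring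
      rw [e, abs_mul, abs_of_pos hc0]
      exact mul_le_mul_of_nonneg_left (main r hr0.le hr1) hc0.le
    calc |(c * W r - c * W 0 + c * (κ * A * r ^ 2))
          - ((∑ m ∈ Finset.range N, b m * r ^ m) - (b 0 + b 1 * r + b 2 * r ^ 2))|
        ≤ |c * W r - c * W 0 + c * (κ * A * r ^ 2)|
          + |(∑ m ∈ Finset.range N, b m * r ^ m) - (b 0 + b 1 * r + b 2 * r ^ 2)| := abs_sub _ _
      _ ≤ c * ((κ ^ 2 + 1) * r ^ 3) + B * r ^ 3 := add_le_add h3 (tail r hr0.le hr1)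
      _ = D * r ^ 3 := by rw [hD]; ring
  have hD0 : 0 ≤ D := by
    have := hstep 1 ⟨one_pos, le_rfl⟩
    nlinarith [abs_nonneg (b 1 * 1 + γ * 1 ^ 2)]
  have hb1 : b 1 = 0 := by
    apply tiny_zero (M := |γ| + D)
    intro r hr
    obtain ⟨hr0, hr1⟩ := hr
    have h4 := hstep r ⟨hr0, hr1⟩
    have h5 : |b 1 * r + γ * r ^ 2| = r * |b 1 + γ * r| := by
      rw [show b 1 * r + γ * r ^ 2 = r * (b 1 + γ * r) by ring, abs_mul, abs_of_pos hr0]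
    rw [h5] at h4
    have h6 : |b 1 + γ * r| ≤ D * r ^ 2 := by
      have := (mul_le_mul_iff_right₀ hr0).mp (by nlinarith : r * |b 1 + γ * r| ≤ r * (D * r ^ 2))
      exact this
    have h7 : |b 1| ≤ |b 1 + γ * r| + |γ * r| := by
      have := abs_sub (b 1 + γ * r) (γ * r)
      simpa using this
    have h8 : |γ * r| = |γ| * r := by rw [abs_mul, abs_of_pos hr0]
    calc |b 1| ≤ |b 1 + γ * r| + |γ * r| := h7
      _ ≤ D * r ^ 2 + |γ| * r := by rw [h8] at *; exact add_le_add h6 le_rfl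
      _ ≤ D * r + |γ| * r := by
          have h9 : r ^ 2 ≤ r := by nlinarith
          exact add_le_add (mul_le_mul_of_nonneg_left h9 hD0) le_rfl
      _ = (|γ| + D) * r := by ring
  have hγ0 : γ = 0 := by
    apply tiny_zero (M := D)
    intro r hr
    obtain ⟨hr0, hr1⟩ := hr
    have h4 := hstep r ⟨hr0, hr1⟩
    rw [hb1] at h4
    have h5 : |γ| * r ^ 2 ≤ D * r ^ 3 := by
      have h9 : |γ * r ^ 2| = |γ| * r ^ 2 := by rw [abs_mul, abs_of_pos (pow_pos hr0 2)]
      rw [← h9]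
      simpa using h4
    have h6 : |γ| * r ^ 2 ≤ (D * r) * r ^ 2 := by nlinarith
    exact le_of_mul_le_mul_right h6 (pow_pos hr0 2)
  constructor
  · exact hb1
  · have : b 2 = -(c * (κ * A)) := by rw [hγ] at hγ0; linarith
    rw [this]
    have hpos : 0 < c * (κ * A) := mul_pos hc0 (mul_pos (lt_of_lt_of_le one_pos hκ1) hA0)
    linarith

lemma norm_pow_hasFDerivAt {E : Type*} [NormedAddCommGroup E] [InnerProductSpace ℝ E]
    (m : ℕ) (hm : 2 ≤ m) (z : E) :
    HasFDerivAt (fun x : E => ‖x‖ ^ m)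
      (((m : ℝ) * ‖z‖ ^ (m - 2)) • (innerSL ℝ z : E →L[ℝ] ℝ)) z := by
  rcases eq_or_ne z 0 with rfl | hz
  · have h0 : ((m : ℝ) * ‖(0:E)‖ ^ (m - 2)) • (innerSL ℝ (0:E) : E →L[ℝ] ℝ) = 0 := by
      have h1 : (innerSL ℝ (0:E) : E →L[ℝ] ℝ) = 0 := by
        ext v; simp
      rw [h1, smul_zero]
    rw [h0, hasFDerivAt_iff_isLittleO_nhds_zero]
    rw [Asymptotics.isLittleO_iff]
    intro ε hε
    filter_upwards [Metric.ball_mem_nhds (0:E) (lt_min one_pos hε)] with h hmem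
    rw [mem_ball_zero_iff] at hmem
    have hn1 : ‖h‖ < 1 := lt_of_lt_of_le hmem (min_le_left _ _)
    have hnε : ‖h‖ < ε := lt_of_lt_of_le hmem (min_le_right _ _)
    simp only [zero_add, norm_zero, zero_pow (by omega : m ≠ 0), sub_zero,
      ContinuousLinearMap.zero_apply]
    have h2 : ‖h‖ ^ m ≤ ‖h‖ ^ 2 := pow_le_pow_of_le_one (norm_nonneg h) hn1.le hm
    have h3 : ‖h‖ ^ 2 ≤ ε * ‖h‖ := by nlinarith [norm_nonneg h]
    calc ‖‖h‖ ^ m‖ = ‖h‖ ^ m := by rw [Real.norm_eq_abs, abs_of_nonneg (by positivity)]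
      _ ≤ ε * ‖h‖ := le_trans h2 h3
  · have hnz : ‖z‖ ≠ 0 := norm_ne_zero_iff.mpr hz
    have hsq : ‖z‖ ^ 2 ≠ 0 := pow_ne_zero 2 hnz
    have h2 : HasFDerivAt (fun x : E => ‖x‖ ^ 2)
        ((2:ℕ) • (innerSL ℝ z : E →L[ℝ] ℝ)) z := by
      have := (hasFDerivAt_id z).norm_sq
      simpa using this
    have hsqrt : HasDerivAt Real.sqrt (1 / (2 * Real.sqrt (‖z‖ ^ 2))) (‖z‖ ^ 2) :=
      Real.hasDerivAt_sqrt hsq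
    have h3 := hsqrt.comp_hasFDerivAt z h2
    have hfun : (Real.sqrt ∘ fun x : E => ‖x‖ ^ 2) = fun x : E => ‖x‖ := by
      funext x
      simp [Function.comp, Real.sqrt_sq (norm_nonneg x)]
    rw [hfun] at h3
    have h4 := (hasDerivAt_pow m ‖z‖).comp_hasFDerivAt z h3
    have hfun2 : ((fun t : ℝ => t ^ m) ∘ fun x : E => ‖x‖) = fun x : E => ‖x‖ ^ m := rfl
    rw [hfun2] at h4
    refine h4.congr_fderiv ?_
    rw [Real.sqrt_sq (norm_nonneg z)]
    ext v
    simp only [ContinuousLinearMap.smul_apply, smul_eq_mul, ContinuousLinearMap.coe_smul',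
      Pi.smul_apply, nsmul_eq_mul]
    have hpow : ‖z‖ ^ (m - 1) = ‖z‖ ^ (m - 2) * ‖z‖ := by
      rw [← pow_succ]
      congr 1
      omega
    rw [hpow]
    field_simp
    ring

lemma second_deriv (d N : ℕ) (hN : 3 ≤ N) (b : ℕ → ℝ) (hb1 : b 1 = 0)
    (g : ℝ → ℝ) (hg : ∀ r : ℝ, 0 ≤ r → r ≤ 1 → g r = ∑ m ∈ Finset.range N, b m * r ^ m)
    (y : EuclideanSpace ℝ (Fin d)) (j : Fin d) :
    pd j (pd j (fun x => g ‖x - y‖)) y = 2 * b 2 := by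
  classical
  set f : EuclideanSpace ℝ (Fin d) → ℝ := fun x => g ‖x - y‖ with hfdef
  set G : EuclideanSpace ℝ (Fin d) → ℝ := fun v => b 0 + ∑ m ∈ Finset.Ico 2 N, b m * ‖v‖ ^ m with hGdef
  set S : ℝ → ℝ := fun t => ∑ m ∈ Finset.Ico 2 N, b m * ((m : ℝ) * t ^ (m - 2)) with hSdef
  -- f agrees with G ∘ (· - y) on the unit ball
  have hfG : ∀ x : EuclideanSpace ℝ (Fin d), x ∈ Metric.ball y 1 → f x = G (x - y) := by
    intro x hx
    rw [Metric.mem_ball, dist_eq_norm] at hx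
    have h0 : (0:ℝ) ≤ ‖x - y‖ := norm_nonneg _
    rw [hfdef]
    simp only []
    rw [hg ‖x - y‖ h0 hx.le]
    have hsplit : ∑ m ∈ Finset.range N, b m * ‖x - y‖ ^ m
        = (∑ m ∈ Finset.range 2, b m * ‖x - y‖ ^ m)
          + ∑ m ∈ Finset.Ico 2 N, b m * ‖x - y‖ ^ m := by
      rw [Finset.range_eq_Ico, ← Finset.sum_Ico_consecutive _ (by omega : 0 ≤ 2) (by omega : 2 ≤ N),
        ← Finset.range_eq_Ico]
    rw [hsplit, Finset.sum_range_succ, Finset.sum_range_one, hb1, hGdef]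
    simp
  -- derivative of G
  have hG' : ∀ v : EuclideanSpace ℝ (Fin d), HasFDerivAt G ((S ‖v‖) • (innerSL ℝ v : EuclideanSpace ℝ (Fin d) →L[ℝ] ℝ)) v := by
    intro v
    have hsum : HasFDerivAt (fun u : EuclideanSpace ℝ (Fin d) => ∑ m ∈ Finset.Ico 2 N, b m * ‖u‖ ^ m)
        (∑ m ∈ Finset.Ico 2 N,
          (b m) • (((m : ℝ) * ‖v‖ ^ (m - 2)) • (innerSL ℝ v : EuclideanSpace ℝ (Fin d) →L[ℝ] ℝ))) v := by
      apply HasFDerivAt.fun_sum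
      intro m hm
      exact (norm_pow_hasFDerivAt m (Finset.mem_Ico.mp hm).1 v).const_mul (b m)
    have heq : (S ‖v‖) • (innerSL ℝ v : EuclideanSpace ℝ (Fin d) →L[ℝ] ℝ)
        = ∑ m ∈ Finset.Ico 2 N,
          (b m) • (((m : ℝ) * ‖v‖ ^ (m - 2)) • (innerSL ℝ v : EuclideanSpace ℝ (Fin d) →L[ℝ] ℝ)) := by
      rw [hSdef]
      simp only [Finset.sum_smul]
      exact Finset.sum_congr rfl fun m _ => (smul_smul _ _ _).symm
    rw [hGdef]
    exact (heq ▸ hsum).const_add (b 0)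
  -- derivative of f on the ball
  have hf' : ∀ x : EuclideanSpace ℝ (Fin d), x ∈ Metric.ball y 1 →
      HasFDerivAt f ((S ‖x - y‖) • (innerSL ℝ (x - y) : EuclideanSpace ℝ (Fin d) →L[ℝ] ℝ)) x := by
    intro x hx
    have hcomp := (hG' (x - y)).comp x ((hasFDerivAt_id x).sub_const y)
    rw [ContinuousLinearMap.comp_id] at hcomp
    apply hcomp.congr_of_eventuallyEq
    filter_upwards [Metric.isOpen_ball.mem_nhds hx] with u hu
    rw [hfG u hu]
    rfl
  -- pd j' f locally
  have hpd : ∀ j' : Fin d, pd j' f =ᶠ[nhds y] fun x => S ‖x - y‖ * ((x - y) j') := by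
    intro j'
    filter_upwards [Metric.ball_mem_nhds y one_pos] with x hx
    have h1 := (hf' x hx).fderiv
    rw [pd, h1]
    simp only [ContinuousLinearMap.smul_apply, smul_eq_mul, innerSL_apply_apply]
    congr 1
    rw [EuclideanSpace.inner_single_right]
    simp
  -- value of S at 0
  have hS0 : S 0 = 2 * b 2 := by
    simp only [hSdef]
    rw [Finset.sum_eq_single 2]
    · simp [mul_comm]
    · intro m hm hm2
      have h3 : 3 ≤ m := by
        rcases Finset.mem_Ico.mp hm with ⟨h4, _⟩
        omega
      rw [zero_pow (by omega : m - 2 ≠ 0)]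
      ring
    · intro h2
      exact absurd (Finset.mem_Ico.mpr ⟨le_refl 2, by omega⟩) h2
  -- Lipschitz-type bound for S near 0
  set C : ℝ := ∑ m ∈ Finset.Ico 2 N, |b m| * m with hC
  have hC0 : 0 ≤ C := Finset.sum_nonneg fun m _ => by positivity
  have hSlip : ∀ t : ℝ, 0 ≤ t → t ≤ 1 → |S t - S 0| ≤ C * t := by
    intro t h0 h1
    rw [hSdef]
    simp only []
    rw [← Finset.sum_sub_distrib]
    calc |∑ m ∈ Finset.Ico 2 N, (b m * ((m:ℝ) * t ^ (m-2)) - b m * ((m:ℝ) * (0:ℝ) ^ (m-2)))|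
        ≤ ∑ m ∈ Finset.Ico 2 N, |b m * ((m:ℝ) * t ^ (m-2)) - b m * ((m:ℝ) * (0:ℝ) ^ (m-2))| :=
          Finset.abs_sum_le_sum_abs _ _
      _ ≤ ∑ m ∈ Finset.Ico 2 N, (|b m| * m) * t := by
          apply Finset.sum_le_sum
          intro m hm
          obtain ⟨hm2, _⟩ := Finset.mem_Ico.mp hm
          rcases eq_or_lt_of_le hm2 with h4 | h4
          · rw [← h4]
            norm_num
            positivity
          · have h5 : (0:ℝ) ^ (m - 2) = 0 := zero_pow (by omega : m - 2 ≠ 0)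
            rw [h5, mul_zero, mul_zero, sub_zero, abs_mul, abs_mul]
            have h6 : |t ^ (m - 2)| ≤ t := by
              rw [abs_of_nonneg (by positivity)]
              calc t ^ (m - 2) ≤ t ^ 1 := pow_le_pow_of_le_one h0 h1 (by omega)
                _ = t := pow_one t
            have h7 : |(m:ℝ)| = (m:ℝ) := abs_of_nonneg (by positivity)
            rw [h7]
            calc |b m| * ((m:ℝ) * |t ^ (m-2)|) ≤ |b m| * ((m:ℝ) * t) := by
                  apply mul_le_mul_of_nonneg_left _ (abs_nonneg _)
                  exact mul_le_mul_of_nonneg_left h6 (by positivity)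
              _ = |b m| * (m:ℝ) * t := by ring
      _ = C * t := by rw [hC, Finset.sum_mul]
  -- second derivative
  have hH : ∀ j' : Fin d, HasFDerivAt (fun x : EuclideanSpace ℝ (Fin d) => S ‖x - y‖ * ((x - y) j'))
      ((2 * b 2) • (innerSL ℝ (EuclideanSpace.single j' 1 : EuclideanSpace ℝ (Fin d)) : EuclideanSpace ℝ (Fin d) →L[ℝ] ℝ)) y := by
    intro j'
    rw [hasFDerivAt_iff_isLittleO_nhds_zero]
    have hcoord : ∀ z : EuclideanSpace ℝ (Fin d), |z j'| ≤ ‖z‖ := by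
      intro z
      have h1 := abs_real_inner_le_norm z (EuclideanSpace.single j' 1)
      rw [EuclideanSpace.inner_single_right, EuclideanSpace.norm_single] at h1
      simpa using h1
    rw [Asymptotics.isLittleO_iff]
    intro ε hε
    filter_upwards [Metric.ball_mem_nhds (0:EuclideanSpace ℝ (Fin d)) (lt_min one_pos (by positivity : 0 < ε / (C + 1)))]
      with z hz
    rw [mem_ball_zero_iff] at hz
    have hz1 : ‖z‖ < 1 := lt_of_lt_of_le hz (min_le_left _ _)
    have hzε : ‖z‖ < ε / (C + 1) := lt_of_lt_of_le hz (min_le_right _ _)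
    have e1 : y + z - y = z := by abel
    have e2 : y - y = (0:EuclideanSpace ℝ (Fin d)) := sub_self y
    simp only [e1, e2, norm_zero]
    have e3 : (0:EuclideanSpace ℝ (Fin d)) j' = 0 := rfl
    rw [e3, mul_zero, sub_zero]
    have e4 : ((2 * b 2) • (innerSL ℝ (EuclideanSpace.single j' 1 : EuclideanSpace ℝ (Fin d)) : EuclideanSpace ℝ (Fin d) →L[ℝ] ℝ)) z
        = 2 * b 2 * (z j') := by
      simp only [ContinuousLinearMap.smul_apply, smul_eq_mul, innerSL_apply_apply]
      rw [EuclideanSpace.inner_single_left]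
      simp
    rw [e4]
    have e5 : S ‖z‖ * z j' - 2 * b 2 * z j' = (S ‖z‖ - S 0) * z j' := by
      rw [hS0]; ring
    rw [e5]
    have h6 : |(S ‖z‖ - S 0) * (z j')| ≤ (C * ‖z‖) * ‖z‖ := by
      rw [abs_mul]
      apply mul_le_mul (hSlip ‖z‖ (norm_nonneg z) hz1.le) (hcoord z) (abs_nonneg _)
        (by positivity)
    rw [Real.norm_eq_abs]
    calc |(S ‖z‖ - S 0) * (z j')| ≤ (C * ‖z‖) * ‖z‖ := h6
      _ ≤ (C * (ε / (C + 1))) * ‖z‖ := by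
          apply mul_le_mul_of_nonneg_right _ (norm_nonneg z)
          exact mul_le_mul_of_nonneg_left hzε.le hC0
      _ ≤ ε * ‖z‖ := by
          apply mul_le_mul_of_nonneg_right _ (norm_nonneg z)
          rw [div_eq_mul_inv]
          have : C * (ε * (C + 1)⁻¹) = ε * (C * (C + 1)⁻¹) := by ring
          rw [this]
          have h8 : C * (C + 1)⁻¹ ≤ 1 := by
            rw [mul_inv_le_iff₀ (by linarith)]
            linarith
          nlinarith
  -- conclude
  have hfinal : fderiv ℝ (pd j f) y = fderiv ℝ (fun x => S ‖x - y‖ * ((x - y) j)) y :=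
    (hpd j).fderiv_eq
  show fderiv ℝ (pd j f) y (EuclideanSpace.single j 1) = 2 * b 2
  rw [hfinal, (hH j).fderiv]
  simp only [ContinuousLinearMap.smul_apply, smul_eq_mul, innerSL_apply_apply]
  rw [EuclideanSpace.inner_single_left]
  simp [EuclideanSpace.single_apply]

/-- for the radial Wendland function `Ψ_{ℓ,k}(x) = ψ_{ℓ,k}(‖x‖₂)` on `ℝ^d` with
`k ≥ 2` and `ℓ = ⌊d/2⌋ + k + 1`, the pure second partials at coincident points satisfy
`∂_j ∂_j Ψ_{ℓ,k}(x-y)|_{x=y} < 0`, this value equals `2 b₂` (twice the quadratic coefficient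
of the polynomial representation of `ψ_{ℓ,k}` on `[0,1]`), and it is independent of `j`. -/
theorem stmt9
    (d k : ℕ) (hd : 0 < d) (hk : 2 ≤ k)
    (b : ℕ → ℝ)
    (hb : ∀ r : ℝ, 0 ≤ r → r ≤ 1 →
      wend (d / 2 + k + 1) k r =
        ∑ m ∈ Finset.range (2 * k + (d / 2 + k + 1) + 1), b m * r ^ m)
    (j : Fin d) :
    (∀ y : EuclideanSpace ℝ (Fin d),
      pd j (pd j (fun x : EuclideanSpace ℝ (Fin d) => wend (d / 2 + k + 1) k ‖x - y‖)) y < 0 ∧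
      pd j (pd j (fun x : EuclideanSpace ℝ (Fin d) => wend (d / 2 + k + 1) k ‖x - y‖)) y =
        2 * b 2 ∧
      ∀ j' : Fin d,
        pd j' (pd j' (fun x : EuclideanSpace ℝ (Fin d) => wend (d / 2 + k + 1) k ‖x - y‖)) y =
          pd j (pd j (fun x : EuclideanSpace ℝ (Fin d) => wend (d / 2 + k + 1) k ‖x - y‖)) y) := by
  intro y
  obtain ⟨hb1, hb2⟩ :=
    wend_coeffs (d / 2 + k + 1) k hk (2 * k + (d / 2 + k + 1) + 1) (by omega) b hb
  have key : ∀ j' : Fin d,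
      pd j' (pd j' (fun x : EuclideanSpace ℝ (Fin d) => wend (d / 2 + k + 1) k ‖x - y‖)) y
        = 2 * b 2 :=
    fun j' => second_deriv d (2 * k + (d / 2 + k + 1) + 1) (by omega) b hb1
      (wend (d / 2 + k + 1) k) hb y j'
  refine ⟨?_, key j, fun j' => (key j').trans (key j).symm⟩
  rw [key j]
  linarith
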